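/- arXiv:2205.12521 — 2 statements merged into one kernel-verified Lean document; each statement's English description precedes it below -/
import Mathlib

section
/- Let B be an N-function with right derivative b satisfying 1 < l := inf_{t>0} t·b(t)/B(t) ≤ sup_{t>0} t·b(t)/B(t) =: m < ∞, and let B̃ be its complement with right derivative B̃'. Then m/(m−1) = inf_{t>0} t·B̃'(t)/B̃(t) ≤ sup_{t>0} t·B̃'(t)/B̃(t) = l/(l−1). -/
open Real Filter MeasureTheory Set ENNReal

lemma young_aux (f g : ℝ → ℝ) (hf : Monotone f) (hg : Monotone g) {u s : ℝ}
    (hu : 0 ≤ u) (hs : 0 ≤ s)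
    (h0f : ∀ x ∈ Set.Ioo (0:ℝ) u, 0 ≤ f x ∧ f x < s)
    (h0g : ∀ y ∈ Set.Ioo (0:ℝ) s, 0 ≤ g y ∧ g y ≤ u)
    (hdisj : ∀ x y, x ∈ Set.Ioo (0:ℝ) u → y ∈ Set.Ioo (0:ℝ) s → x < g y → f x < y)
    (hcov : ∀ x y, x ∈ Set.Ioo (0:ℝ) u → y ∈ Set.Ioo (0:ℝ) s → f x < y → x < g y) :
    u * s = (∫ x in (0:ℝ)..u, f x) + ∫ y in (0:ℝ)..s, g y := by
  have mf := hf.measurable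
  have mg := hg.measurable
  set A : Set (ℝ × ℝ) := {p | p.1 ∈ Set.Ioo (0:ℝ) u ∧ p.2 ∈ Set.Ioc 0 (f p.1)} with hA_def
  set C : Set (ℝ × ℝ) := {p | p.1 ∈ Set.Ioo (0:ℝ) s ∧ p.2 ∈ Set.Ioo 0 (g p.1)} with hC_def
  have hAmeas : MeasurableSet A := by
    have : A = ((Set.Ioo (0:ℝ) u) ×ˢ (Set.univ : Set ℝ)) ∩
        ({p : ℝ × ℝ | 0 < p.2} ∩ {p : ℝ × ℝ | p.2 ≤ f p.1}) := by
      ext p; simp [hA_def, Set.mem_prod]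
    rw [this]
    exact (measurableSet_Ioo.prod MeasurableSet.univ).inter
      ((measurable_snd measurableSet_Ioi).inter (measurableSet_le measurable_snd (mf.comp measurable_fst)))
  have hCmeas : MeasurableSet C := by
    have : C = ((Set.Ioo (0:ℝ) s) ×ˢ (Set.univ : Set ℝ)) ∩
        ({p : ℝ × ℝ | 0 < p.2} ∩ {p : ℝ × ℝ | p.2 < g p.1}) := by
      ext p; simp [hC_def, Set.mem_prod]
    rw [this]
    exact (measurableSet_Ioo.prod MeasurableSet.univ).inter
      ((measurable_snd measurableSet_Ioi).inter (measurableSet_lt measurable_snd (mg.comp measurable_fst)))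
  set C' : Set (ℝ × ℝ) := Prod.swap ⁻¹' C with hC'_def
  have hC'meas : MeasurableSet C' := hCmeas.preimage measurable_swap
  have hC'mem : ∀ p : ℝ × ℝ, p ∈ C' ↔ (p.2 ∈ Set.Ioo (0:ℝ) s ∧ p.1 ∈ Set.Ioo 0 (g p.2)) := by
    intro p; rfl
  -- partition
  have hpart : Set.Ioo (0:ℝ) u ×ˢ Set.Ioo (0:ℝ) s = A ∪ C' := by
    ext ⟨x, y⟩
    simp only [Set.mem_prod, Set.mem_union, hC'mem, hA_def, Set.mem_setOf_eq, Set.mem_Ioo,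
      Set.mem_Ioc]
    constructor
    · rintro ⟨hx, hy⟩
      rcases le_or_gt y (f x) with h | h
      · exact Or.inl ⟨hx, hy.1, h⟩
      · exact Or.inr ⟨hy, (hx.1), hcov x y hx hy h⟩
    · rintro (⟨hx, hy⟩ | ⟨hy, hx⟩)
      · exact ⟨hx, hy.1, lt_of_le_of_lt hy.2 (h0f x hx).2⟩
      · exact ⟨⟨hx.1, lt_of_lt_of_le hx.2 (h0g y hy).2⟩, hy⟩
  have hdis : Disjoint A C' := by
    rw [Set.disjoint_left]
    rintro ⟨x, y⟩ ⟨hx, hy⟩ hpc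
    rw [hC'mem] at hpc
    exact absurd hy.2 (not_le.2 (hdisj x y hx hpc.1 hpc.2.2))
  -- volumes
  have hvolA : volume A = ∫⁻ x in Set.Ioo (0:ℝ) u, ENNReal.ofReal (f x) := by
    rw [Measure.volume_eq_prod, Measure.prod_apply hAmeas]
    rw [← MeasureTheory.lintegral_indicator measurableSet_Ioo]
    congr 1
    funext x
    by_cases hx : x ∈ Set.Ioo (0:ℝ) u
    · have : Prod.mk x ⁻¹' A = Set.Ioc 0 (f x) := by
        ext y; simp [hA_def]
        exact fun _ _ => hx
      rw [this, Real.volume_Ioc, Set.indicator_of_mem hx, sub_zero]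
    · have : Prod.mk x ⁻¹' A = ∅ := by
        ext y; simp [hA_def]
        exact fun h1 h2 _ => absurd ⟨h1, h2⟩ hx
      rw [this, Set.indicator_of_notMem hx]; simp
  have hvolC : volume C' = ∫⁻ y in Set.Ioo (0:ℝ) s, ENNReal.ofReal (g y) := by
    rw [hC'_def, Measure.volume_eq_prod,
      Measure.measurePreserving_swap.measure_preimage hCmeas.nullMeasurableSet]
    rw [Measure.prod_apply hCmeas]
    rw [← MeasureTheory.lintegral_indicator measurableSet_Ioo]
    congr 1
    funext y
    by_cases hy : y ∈ Set.Ioo (0:ℝ) s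
    · have : Prod.mk y ⁻¹' C = Set.Ioo 0 (g y) := by
        ext x; simp [hC_def]
        exact fun _ _ => hy
      rw [this, Real.volume_Ioo, Set.indicator_of_mem hy, sub_zero]
    · have : Prod.mk y ⁻¹' C = ∅ := by
        ext x; simp [hC_def]
        exact fun h1 h2 _ => absurd ⟨h1, h2⟩ hy
      rw [this, Set.indicator_of_notMem hy]; simp
  have hrect : volume (Set.Ioo (0:ℝ) u ×ˢ Set.Ioo (0:ℝ) s) = ENNReal.ofReal u * ENNReal.ofReal s := by
    rw [Measure.volume_eq_prod, Measure.prod_prod, Real.volume_Ioo, Real.volume_Ioo, sub_zero,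
      sub_zero]
  have hkey : ENNReal.ofReal u * ENNReal.ofReal s
      = (∫⁻ x in Set.Ioo (0:ℝ) u, ENNReal.ofReal (f x))
        + ∫⁻ y in Set.Ioo (0:ℝ) s, ENNReal.ofReal (g y) := by
    rw [← hvolA, ← hvolC, ← hrect, hpart, measure_union hdis hC'meas]
  -- integrability
  have hfint : IntegrableOn f (Set.Ioo (0:ℝ) u) := by
    have := (hf.intervalIntegrable (μ := volume) (a := 0) (b := u)).1
    exact this.mono_set Set.Ioo_subset_Ioc_self
  have hgint : IntegrableOn g (Set.Ioo (0:ℝ) s) := by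
    have := (hg.intervalIntegrable (μ := volume) (a := 0) (b := s)).1
    exact this.mono_set Set.Ioo_subset_Ioc_self
  have hf0 : 0 ≤ᵐ[volume.restrict (Set.Ioo (0:ℝ) u)] f :=
    (ae_restrict_iff' measurableSet_Ioo).2 (ae_of_all _ fun x hx => (h0f x hx).1)
  have hg0 : 0 ≤ᵐ[volume.restrict (Set.Ioo (0:ℝ) s)] g :=
    (ae_restrict_iff' measurableSet_Ioo).2 (ae_of_all _ fun y hy => (h0g y hy).1)
  have h1 := MeasureTheory.ofReal_integral_eq_lintegral_ofReal hfint hf0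
  have h2 := MeasureTheory.ofReal_integral_eq_lintegral_ofReal hgint hg0
  rw [← h1, ← h2, ← ENNReal.ofReal_add, ← ENNReal.ofReal_mul hu] at hkey
  · have hIf : ∫ x in (0:ℝ)..u, f x = ∫ x in Set.Ioo (0:ℝ) u, f x := by
      rw [intervalIntegral.integral_of_le hu, MeasureTheory.integral_Ioc_eq_integral_Ioo]
    have hIg : ∫ y in (0:ℝ)..s, g y = ∫ y in Set.Ioo (0:ℝ) s, g y := by
      rw [intervalIntegral.integral_of_le hs, MeasureTheory.integral_Ioc_eq_integral_Ioo]
    rw [hIf, hIg]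
    exact (ENNReal.ofReal_eq_ofReal_iff (mul_nonneg hu hs)
      (add_nonneg (setIntegral_nonneg measurableSet_Ioo fun x hx => (h0f x hx).1)
        (setIntegral_nonneg measurableSet_Ioo fun y hy => (h0g y hy).1))).1 hkey
  · exact setIntegral_nonneg measurableSet_Ioo fun x hx => (h0f x hx).1
  · exact setIntegral_nonneg measurableSet_Ioo fun y hy => (h0g y hy).1

set_option maxHeartbeats 1000000 in
theorem stmt_3 (b B binv Btilde : ℝ → ℝ) (l m : ℝ)
    (hb_mono : MonotoneOn b (Set.Ici 0))
    (hb_rc : ∀ t ≥ (0:ℝ), ContinuousWithinAt b (Set.Ici t) t)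
    (hb0 : b 0 = 0)
    (hb_pos : ∀ t > (0:ℝ), 0 < b t)
    (hb_top : Tendsto b atTop atTop)
    (hB : ∀ t, B t = ∫ s in (0:ℝ)..|t|, b s)
    (hbinv : ∀ s, binv s = sInf {u : ℝ | 0 ≤ u ∧ s ≤ b u})
    (hBt : ∀ t, Btilde t = ∫ s in (0:ℝ)..|t|, binv s)
    (hbinv_deriv : ∀ t ≥ (0:ℝ), ContinuousWithinAt binv (Set.Ici t) t)
    (hl : IsGLB {r : ℝ | ∃ t > (0:ℝ), r = t * b t / B t} l)
    (hm : IsLUB {r : ℝ | ∃ t > (0:ℝ), r = t * b t / B t} m)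
    (h1l : 1 < l) (hlm : l ≤ m) :
    IsGLB {r : ℝ | ∃ t > (0:ℝ), r = t * binv t / Btilde t} (m / (m - 1)) ∧
    IsLUB {r : ℝ | ∃ t > (0:ℝ), r = t * binv t / Btilde t} (l / (l - 1)) := by
  have hm1 : 1 < m := lt_of_lt_of_le h1l hlm
  have hbnn : ∀ x : ℝ, 0 ≤ x → 0 ≤ b x := by
    intro x hx
    have := hb_mono (Set.self_mem_Ici) hx hx
    rwa [hb0] at this
  -- nonemptiness and bddBelow of the defining sets
  have hSne : ∀ s : ℝ, {u : ℝ | 0 ≤ u ∧ s ≤ b u}.Nonempty := by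
    intro s
    obtain ⟨N, hN⟩ := (Filter.eventually_atTop).1 (hb_top.eventually_ge_atTop s)
    exact ⟨max N 0, le_max_right _ _, hN _ (le_max_left _ _)⟩
  have hbdd : ∀ s : ℝ, BddBelow {u : ℝ | 0 ≤ u ∧ s ≤ b u} := fun s => ⟨0, fun x hx => hx.1⟩
  have hbinv_nonneg : ∀ s, 0 ≤ binv s := fun s => by
    rw [hbinv]; exact le_csInf (hSne s) fun x hx => hx.1
  have hbinv_mono : Monotone binv := by
    intro s t hst
    rw [hbinv, hbinv]
    exact csInf_le_csInf (hbdd s) (hSne t) fun x hx => ⟨hx.1, hst.trans hx.2⟩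
  have hbinv_le : ∀ s t : ℝ, 0 ≤ t → s ≤ b t → binv s ≤ t := by
    intro s t h1 h2
    rw [hbinv]; exact csInf_le (hbdd s) ⟨h1, h2⟩
  have hlt_binv : ∀ s x : ℝ, 0 ≤ x → x < binv s → b x < s := by
    intro s x hx hlt
    by_contra h
    push_neg at h
    exact absurd (hbinv_le s x hx h) (not_le.2 hlt)
  have hgt_binv : ∀ s x : ℝ, binv s < x → s ≤ b x := by
    intro s x hlt
    rw [hbinv] at hlt
    obtain ⟨w, hw, hwx⟩ := (csInf_lt_iff (hbdd s) (hSne s)).1 hlt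
    exact hw.2.trans (hb_mono hw.1 (hw.1.trans hwx.le) hwx.le)
  have hb_binv : ∀ s, s ≤ b (binv s) := by
    intro s
    have h0 : (0:ℝ) ≤ binv s := hbinv_nonneg s
    have htend : Tendsto b (nhdsWithin (binv s) (Set.Ioi (binv s))) (nhds (b (binv s))) :=
      ((hb_rc (binv s) h0).tendsto).mono_left (nhdsWithin_mono _ Set.Ioi_subset_Ici_self)
    exact ge_of_tendsto htend (eventually_nhdsWithin_of_forall fun x hx => hgt_binv s x hx)
  have hbinv_pos : ∀ s : ℝ, 0 < s → 0 < binv s := by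
    intro s hs
    rcases (hbinv_nonneg s).lt_or_eq with h | h
    · exact h
    · exfalso
      have htend : Tendsto b (nhdsWithin (0:ℝ) (Set.Ioi (0:ℝ))) (nhds (b 0)) :=
        ((hb_rc 0 le_rfl).tendsto).mono_left (nhdsWithin_mono _ Set.Ioi_subset_Ici_self)
      have hge : s ≤ b 0 := ge_of_tendsto htend
        (eventually_nhdsWithin_of_forall fun x hx => hgt_binv s x (by rw [← h]; exact hx))
      rw [hb0] at hge; linarith
  -- integrability
  have hbInt : ∀ x y : ℝ, 0 ≤ x → 0 ≤ y → IntervalIntegrable b volume x y := by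
    intro x y hx hy
    have hsub : Set.uIcc x y ⊆ Set.Ici 0 := by
      intro z hz
      rcases Set.mem_uIcc.1 hz with h | h
      · exact le_trans hx h.1
      · exact le_trans hy h.1
    exact (hb_mono.mono hsub).intervalIntegrable
  have hgInt : ∀ x y : ℝ, IntervalIntegrable binv volume x y := fun x y =>
    hbinv_mono.intervalIntegrable
  have hB' : ∀ t : ℝ, 0 ≤ t → B t = ∫ x in (0:ℝ)..t, b x := by
    intro t ht; rw [hB, abs_of_nonneg ht]
  have hBt' : ∀ t : ℝ, 0 ≤ t → Btilde t = ∫ x in (0:ℝ)..t, binv x := by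
    intro t ht; rw [hBt, abs_of_nonneg ht]
  -- extension of b
  set bm : ℝ → ℝ := fun x => b (max x 0) with hbm
  have hbm_mono : Monotone bm := fun x y hxy =>
    hb_mono (Set.mem_Ici.2 (le_max_right _ _)) (Set.mem_Ici.2 (le_max_right _ _)) (max_le_max hxy le_rfl)
  have hbm_eq : ∀ x : ℝ, 0 ≤ x → bm x = b x := by
    intro x hx; rw [hbm]; simp [max_eq_left hx]
  -- Young's equality
  have hyoung : ∀ s : ℝ, 0 < s →
      Btilde s = s * binv s - ∫ x in (0:ℝ)..(binv s), b x := by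
    intro s hs
    have hu0 : 0 < binv s := hbinv_pos s hs
    have h := young_aux bm binv hbm_mono hbinv_mono hu0.le hs.le
      (fun x hx => ⟨(hbm_eq x hx.1.le) ▸ hbnn x hx.1.le,
        (hbm_eq x hx.1.le) ▸ hlt_binv s x hx.1.le hx.2⟩)
      (fun y hy => ⟨hbinv_nonneg y, hbinv_mono hy.2.le⟩)
      (fun x y hx hy hxy => (hbm_eq x hx.1.le) ▸ hlt_binv y x hx.1.le hxy)
      (fun x y hx hy hxy => by
        rcases lt_or_ge x (binv y) with h | h
        · exact h
        · exfalso
          rcases h.lt_or_eq with h' | h'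
          · exact absurd (hgt_binv y x h') (not_le.2 ((hbm_eq x hx.1.le) ▸ hxy))
          · exact absurd (h' ▸ hb_binv y) (not_le.2 ((hbm_eq x hx.1.le) ▸ h' ▸ hxy)))
    have hcong : ∫ x in (0:ℝ)..(binv s), bm x = ∫ x in (0:ℝ)..(binv s), b x := by
      apply intervalIntegral.integral_congr
      intro x hx
      rw [Set.uIcc_of_le hu0.le] at hx
      exact hbm_eq x hx.1
    rw [hcong] at h
    rw [hBt' s hs.le]
    linarith [h]
  -- B is positive
  have hBpos : ∀ t : ℝ, 0 < t → 0 < B t := by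
    intro t ht
    rw [hB' t ht.le,
      ← intervalIntegral.integral_add_adjacent_intervals (hbInt 0 (t/2) le_rfl (by linarith))
        (hbInt (t/2) t (by linarith) ht.le)]
    have h1 : 0 ≤ ∫ x in (0:ℝ)..(t/2), b x :=
      intervalIntegral.integral_nonneg (by linarith) fun x hx => hbnn x hx.1
    have h2 : ∫ x in (t/2)..t, b (t/2) ≤ ∫ x in (t/2)..t, b x := by
      apply intervalIntegral.integral_mono_on (by linarith) intervalIntegrable_const
        (hbInt (t/2) t (by linarith) ht.le)
      intro x hx
      exact hb_mono (show (0:ℝ) ≤ t/2 by linarith) (show (0:ℝ) ≤ x by linarith [hx.1]) hx.1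
    rw [intervalIntegral.integral_const] at h2
    have h3 : 0 < (t - t/2) • b (t/2) := by
      have := hb_pos (t/2) (by linarith)
      simp only [smul_eq_mul]
      nlinarith
    linarith
  -- ratio bounds for b
  have hrating : ∀ t : ℝ, 0 < t → l * B t ≤ t * b t ∧ t * b t ≤ m * B t := by
    intro t ht
    have hmem : t * b t / B t ∈ {r : ℝ | ∃ t > (0:ℝ), r = t * b t / B t} := ⟨t, ht, rfl⟩
    exact ⟨(le_div_iff₀ (hBpos t ht)).1 (hl.1 hmem), (div_le_iff₀ (hBpos t ht)).1 (hm.1 hmem)⟩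
  -- l * B(binv s) ≤ s * binv s
  have hlBu : ∀ s : ℝ, 0 < s → l * (∫ x in (0:ℝ)..(binv s), b x) ≤ s * binv s := by
    intro s hs
    have hu : 0 < binv s := hbinv_pos s hs
    refine le_of_forall_pos_le_add ?_
    intro ε hε
    have hbu : 0 ≤ b (binv s) := hbnn _ hu.le
    have hl0 : (0:ℝ) < l := by linarith
    have hK : (0:ℝ) < l * (b (binv s) + 1) := by nlinarith
    set δ := min (binv s / 2) (ε / (l * (b (binv s) + 1))) with hδ
    have hδpos : 0 < δ := lt_min (by linarith) (div_pos hε hK)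
    have hδu : δ ≤ binv s / 2 := min_le_left _ _
    have hδe : δ ≤ ε / (l * (b (binv s) + 1)) := min_le_right _ _
    set u' := binv s - δ with hu'
    have hu'pos : 0 < u' := by rw [hu']; linarith
    have hu'lt : u' < binv s := by rw [hu']; linarith
    have hsplit : ∫ x in (0:ℝ)..(binv s), b x
        = (∫ x in (0:ℝ)..u', b x) + ∫ x in u'..(binv s), b x :=
      (intervalIntegral.integral_add_adjacent_intervals (hbInt 0 u' le_rfl hu'pos.le)
        (hbInt u' (binv s) hu'pos.le hu.le)).symm
    have hupper : ∫ x in u'..(binv s), b x ≤ δ * b (binv s) := by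
      have h2 : ∫ x in u'..(binv s), b x ≤ ∫ x in u'..(binv s), b (binv s) := by
        apply intervalIntegral.integral_mono_on hu'lt.le (hbInt u' (binv s) hu'pos.le hu.le)
          intervalIntegrable_const
        intro x hx
        exact hb_mono (le_trans hu'pos.le hx.1) hu.le hx.2
      rw [intervalIntegral.integral_const, smul_eq_mul] at h2
      have : binv s - u' = δ := by rw [hu']; ring
      rw [this] at h2
      exact h2
    have hBu' : l * (∫ x in (0:ℝ)..u', b x) ≤ u' * s := by
      have h1 := (hrating u' hu'pos).1
      rw [hB' u' hu'pos.le] at h1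
      have h2 : b u' < s := hlt_binv s u' hu'pos.le hu'lt
      nlinarith
    have hδbound : l * (δ * b (binv s)) ≤ ε := by
      have h6 : δ * (l * b (binv s)) ≤ (ε / (l * (b (binv s) + 1))) * (l * b (binv s)) := by
        apply mul_le_mul_of_nonneg_right hδe
        positivity
      have h7 : (ε / (l * (b (binv s) + 1))) * (l * b (binv s)) ≤ ε := by
        rw [div_mul_eq_mul_div, div_le_iff₀ hK]
        nlinarith
      nlinarith
    have hfin : l * (∫ x in (0:ℝ)..(binv s), b x)
        = l * (∫ x in (0:ℝ)..u', b x) + l * (∫ x in u'..(binv s), b x) := by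
      rw [hsplit]; ring
    have : l * (∫ x in u'..(binv s), b x) ≤ l * (δ * b (binv s)) := by
      apply mul_le_mul_of_nonneg_left _ hl0.le
      exact hupper
    have hu's : u' * s ≤ binv s * s := by nlinarith
    calc l * (∫ x in (0:ℝ)..(binv s), b x)
        = l * (∫ x in (0:ℝ)..u', b x) + l * (∫ x in u'..(binv s), b x) := hfin
      _ ≤ u' * s + l * (δ * b (binv s)) := by linarith
      _ ≤ s * binv s + ε := by nlinarith
  -- s * binv s ≤ m * B(binv s)
  have hsuBu : ∀ s : ℝ, 0 < s → s * binv s ≤ m * ∫ x in (0:ℝ)..(binv s), b x := by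
    intro s hs
    have hu : 0 < binv s := hbinv_pos s hs
    have h1 := (hrating (binv s) hu).2
    rw [hB' (binv s) hu.le] at h1
    have h2 : s ≤ b (binv s) := hb_binv s
    nlinarith
  have hint_nonneg : ∀ s : ℝ, 0 < s → 0 ≤ ∫ x in (0:ℝ)..(binv s), b x := by
    intro s hs
    exact intervalIntegral.integral_nonneg (hbinv_nonneg s) fun x hx => hbnn x hx.1
  have hBtilde_pos : ∀ s : ℝ, 0 < s → 0 < Btilde s := by
    intro s hs
    have hu : 0 < binv s := hbinv_pos s hs
    have h1 := hlBu s hs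
    have h2 := hint_nonneg s hs
    have hy := hyoung s hs
    have hP : 0 < s * binv s := mul_pos hs hu
    nlinarith
  -- bounds on elements of the tilde ratio set
  have hbounds : ∀ t : ℝ, 0 < t →
      m / (m - 1) ≤ t * binv t / Btilde t ∧ t * binv t / Btilde t ≤ l / (l - 1) := by
    intro t ht
    have hu := hbinv_pos t ht
    have hy := hyoung t ht
    have h1 := hlBu t ht
    have h2 := hsuBu t ht
    have hP : 0 < t * binv t := mul_pos ht hu
    have hBtpos := hBtilde_pos t ht
    constructor
    · rw [div_le_div_iff₀ (by linarith) hBtpos]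
      nlinarith
    · rw [div_le_div_iff₀ hBtpos (by linarith)]
      nlinarith
  -- Young at s = b t
  have hyoung2 : ∀ t : ℝ, 0 < t → Btilde (b t) = t * b t - B t := by
    intro t ht
    have hbt : 0 < b t := hb_pos t ht
    have hut : binv (b t) ≤ t := hbinv_le (b t) t ht.le le_rfl
    have hu0 : 0 < binv (b t) := hbinv_pos (b t) hbt
    have hy := hyoung (b t) hbt
    have hflat : ∫ x in (binv (b t))..t, b x = (t - binv (b t)) * b t := by
      have heq : Set.EqOn b (fun _ => b t) (Set.uIcc (binv (b t)) t) := by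
        intro x hx
        rw [Set.uIcc_of_le hut] at hx
        have hxle : b x ≤ b t := hb_mono (le_trans hu0.le hx.1) ht.le hx.2
        have hxge : b t ≤ b x := by
          rcases hx.1.lt_or_eq with h | h
          · exact hgt_binv (b t) x h
          · rw [← h]; exact hb_binv (b t)
        exact le_antisymm hxle hxge
      rw [intervalIntegral.integral_congr heq, intervalIntegral.integral_const, smul_eq_mul]
    have hsplitB : B t = (∫ x in (0:ℝ)..(binv (b t)), b x) + ∫ x in (binv (b t))..t, b x := by
      rw [hB' t ht.le,
        intervalIntegral.integral_add_adjacent_intervals (hbInt 0 (binv (b t)) le_rfl hu0.le)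
          (hbInt (binv (b t)) t hu0.le ht.le)]
    linarith [hy, hflat, hsplitB]
  -- sharpness lemma 1 : upper bounds of tilde set give upper bounds for original ratios
  have sharp1 : ∀ c : ℝ, (∀ s : ℝ, 0 < s → c * Btilde s ≤ s * binv s) → 1 < c →
      ∀ t : ℝ, 0 < t → t * b t * (c - 1) ≤ c * B t := by
    intro c hc hc1 t ht
    have hbt : 0 < b t := hb_pos t ht
    have hst : c * Btilde (b t) ≤ b t * t := by
      refine le_of_forall_pos_le_add ?_
      intro ε hε
      have hbiv : 0 ≤ binv (b t) := hbinv_nonneg (b t)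
      have hK : (0:ℝ) < c * (binv (b t) + 1) := by nlinarith
      set δ := min (b t / 2) (ε / (c * (binv (b t) + 1))) with hδ
      have hδpos : 0 < δ := lt_min (by linarith) (div_pos hε hK)
      have hδs : δ ≤ b t / 2 := min_le_left _ _
      have hδe : δ ≤ ε / (c * (binv (b t) + 1)) := min_le_right _ _
      set s' := b t - δ with hs'
      have hs'pos : 0 < s' := by rw [hs']; linarith
      have hs'lt : s' < b t := by rw [hs']; linarith
      have h1 := hc s' hs'pos
      have h2 : binv s' ≤ t := hbinv_le s' t ht.le hs'lt.le
      have h3 : s' * binv s' ≤ b t * t := by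
        have := hbinv_nonneg s'
        nlinarith
      have h4 : Btilde (b t) ≤ Btilde s' + δ * binv (b t) := by
        have hsplit : ∫ x in (0:ℝ)..(b t), binv x
            = (∫ x in (0:ℝ)..s', binv x) + ∫ x in s'..(b t), binv x :=
          (intervalIntegral.integral_add_adjacent_intervals (hgInt 0 s') (hgInt s' (b t))).symm
        have hup : ∫ x in s'..(b t), binv x ≤ δ * binv (b t) := by
          have h5 : ∫ x in s'..(b t), binv x ≤ ∫ x in s'..(b t), binv (b t) := by
            apply intervalIntegral.integral_mono_on hs'lt.le (hgInt s' (b t))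
              intervalIntegrable_const
            intro x hx
            exact hbinv_mono hx.2
          rw [intervalIntegral.integral_const, smul_eq_mul] at h5
          have : b t - s' = δ := by rw [hs']; ring
          rw [this] at h5
          exact h5
        rw [hBt' (b t) hbt.le, hBt' s' hs'pos.le, hsplit]
        linarith
      have hδbound : c * (δ * binv (b t)) ≤ ε := by
        have h6 : δ * (c * binv (b t)) ≤ (ε / (c * (binv (b t) + 1))) * (c * binv (b t)) := by
          apply mul_le_mul_of_nonneg_right hδe
          nlinarith
        have h7 : (ε / (c * (binv (b t) + 1))) * (c * binv (b t)) ≤ ε := by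
          rw [div_mul_eq_mul_div, div_le_iff₀ hK]
          nlinarith
        nlinarith
      calc c * Btilde (b t) ≤ c * (Btilde s' + δ * binv (b t)) := by nlinarith
        _ = c * Btilde s' + c * (δ * binv (b t)) := by ring
        _ ≤ s' * binv s' + c * (δ * binv (b t)) := by linarith
        _ ≤ b t * t + ε := by nlinarith
    have hy2 := hyoung2 t ht
    nlinarith
  -- sharpness lemma 2 : lower bounds of tilde set give lower bounds for original ratios
  have sharp2 : ∀ c : ℝ, (∀ s : ℝ, 0 < s → s * binv s ≤ c * Btilde s) → 1 < c →
      ∀ t : ℝ, 0 < t → c * B t ≤ t * b t * (c - 1) := by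
    intro c hc hc1 t ht
    have hbt : 0 < b t := hb_pos t ht
    have hst : b t * t ≤ c * Btilde (b t) := by
      refine le_of_forall_pos_le_add ?_
      intro ε hε
      have hbiv : 0 ≤ binv (b t + 1) := hbinv_nonneg (b t + 1)
      have hK : (0:ℝ) < c * (binv (b t + 1) + 1) := by nlinarith
      set δ := min 1 (ε / (c * (binv (b t + 1) + 1))) with hδ
      have hδpos : 0 < δ := lt_min one_pos (div_pos hε hK)
      have hδ1 : δ ≤ 1 := min_le_left _ _
      have hδe : δ ≤ ε / (c * (binv (b t + 1) + 1)) := min_le_right _ _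
      set s' := b t + δ with hs'
      have hs'pos : 0 < s' := by rw [hs']; linarith
      have hs'gt : b t < s' := by rw [hs']; linarith
      have hs'le : s' ≤ b t + 1 := by rw [hs']; linarith
      have h2 : t ≤ binv s' := by
        rw [hbinv]
        apply le_csInf (hSne s')
        intro v hv
        by_contra hcon
        push_neg at hcon
        have : b v ≤ b t := hb_mono hv.1 ht.le hcon.le
        linarith [hv.2]
      have h1 := hc s' hs'pos
      have h3 : t * s' ≤ s' * binv s' := by nlinarith
      have h4 : Btilde s' ≤ Btilde (b t) + δ * binv (b t + 1) := by
        have hsplit : ∫ x in (0:ℝ)..s', binv x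
            = (∫ x in (0:ℝ)..(b t), binv x) + ∫ x in (b t)..s', binv x :=
          (intervalIntegral.integral_add_adjacent_intervals (hgInt 0 (b t)) (hgInt (b t) s')).symm
        have hup : ∫ x in (b t)..s', binv x ≤ δ * binv (b t + 1) := by
          have h5 : ∫ x in (b t)..s', binv x ≤ ∫ x in (b t)..s', binv (b t + 1) := by
            apply intervalIntegral.integral_mono_on hs'gt.le (hgInt (b t) s')
              intervalIntegrable_const
            intro x hx
            exact hbinv_mono (le_trans hx.2 hs'le)
          rw [intervalIntegral.integral_const, smul_eq_mul] at h5
          have : s' - b t = δ := by rw [hs']; ring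
          rw [this] at h5
          exact h5
        rw [hBt' s' hs'pos.le, hBt' (b t) hbt.le, hsplit]
        linarith
      have hδbound : c * (δ * binv (b t + 1)) ≤ ε := by
        have h6 : δ * (c * binv (b t + 1)) ≤ (ε / (c * (binv (b t + 1) + 1))) * (c * binv (b t + 1)) := by
          apply mul_le_mul_of_nonneg_right hδe
          nlinarith
        have h7 : (ε / (c * (binv (b t + 1) + 1))) * (c * binv (b t + 1)) ≤ ε := by
          rw [div_mul_eq_mul_div, div_le_iff₀ hK]
          nlinarith
        nlinarith
      calc b t * t ≤ t * s' := by nlinarith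
        _ ≤ s' * binv s' := h3
        _ ≤ c * Btilde s' := h1
        _ ≤ c * (Btilde (b t) + δ * binv (b t + 1)) := by nlinarith
        _ ≤ c * Btilde (b t) + ε := by nlinarith
    have hy2 := hyoung2 t ht
    nlinarith
  -- assembly
  constructor
  · constructor
    · rintro r ⟨t, ht, rfl⟩
      exact (hbounds t ht).1
    · intro c hc
      by_contra hcon
      push_neg at hcon
      have hm2 : 1 < m / (m - 1) := by
        rw [lt_div_iff₀ (by linarith)]
        linarith
      have hc1 : 1 < c := lt_trans hm2 hcon
      have hcs : ∀ s : ℝ, 0 < s → c * Btilde s ≤ s * binv s := by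
        intro s hs
        have := hc ⟨s, hs, rfl⟩
        exact (le_div_iff₀ (hBtilde_pos s hs)).1 this
      have hub := sharp1 c hcs hc1
      have hmle : m ≤ c / (c - 1) := by
        apply hm.2
        rintro r ⟨t, ht, rfl⟩
        rw [div_le_div_iff₀ (hBpos t ht) (by linarith : (0:ℝ) < c - 1)]
        nlinarith [hub t ht]
      have h1 : m < c * (m - 1) := (div_lt_iff₀ (by linarith)).1 hcon
      have h2 : m * (c - 1) ≤ c := (le_div_iff₀ (by linarith)).1 hmle
      nlinarith
  · constructor
    · rintro r ⟨t, ht, rfl⟩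
      exact (hbounds t ht).2
    · intro c hc
      by_contra hcon
      push_neg at hcon
      have hc1 : 1 < c := by
        have he := hc ⟨1, one_pos, rfl⟩
        have hb1 := (hbounds 1 one_pos).1
        have hm2 : 1 < m / (m - 1) := by
          rw [lt_div_iff₀ (by linarith)]
          linarith
        linarith
      have hcs : ∀ s : ℝ, 0 < s → s * binv s ≤ c * Btilde s := by
        intro s hs
        have := hc ⟨s, hs, rfl⟩
        exact (div_le_iff₀ (hBtilde_pos s hs)).1 this
      have hlb := sharp2 c hcs hc1
      have hlge : c / (c - 1) ≤ l := by
        apply hl.2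
        rintro r ⟨t, ht, rfl⟩
        rw [div_le_div_iff₀ (by linarith : (0:ℝ) < c - 1) (hBpos t ht)]
        nlinarith [hlb t ht]
      have h1 : c * (l - 1) < l := (lt_div_iff₀ (by linarith)).1 hcon
      have h2 : c ≤ l * (c - 1) := (div_le_iff₀ (by linarith)).1 hlge
      nlinarith
end

section
/- Let B be an N-function with 1 ≤ l = inf_{t>0} t b(t)/B(t) ≤ sup_{t>0} t b(t)/B(t) = m < ∞. Then for every u ∈ L^B(Ω), min{‖u‖_B^l, ‖u‖_B^m} ≤ ∫_Ω B(u) dx ≤ max{‖u‖_B^l, ‖u‖_B^m}. -/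
open Filter MeasureTheory Set intervalIntegral

section Gfacts
variable {b : ℝ → ℝ}
variable (hb_mono : MonotoneOn b (Set.Ici 0))
variable (hb_rc : ∀ t ≥ (0:ℝ), ContinuousWithinAt b (Set.Ici t) t)
variable (hb0 : b 0 = 0)
variable (hb_pos : ∀ t > (0:ℝ), 0 < b t)

/-- modified b -/
noncomputable def bmod (b : ℝ → ℝ) : ℝ → ℝ := fun s => b (max s 0)

/-- primitive -/
noncomputable def Gfun (b : ℝ → ℝ) : ℝ → ℝ := fun x => ∫ s in (0:ℝ)..(max x 0), bmod b s

include hb_mono in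
lemma bmod_mono : Monotone (bmod b) := fun s t hst =>
  hb_mono (Set.mem_Ici.2 (le_max_right s 0)) (Set.mem_Ici.2 (le_max_right t 0))
    (max_le_max hst le_rfl)

include hb_mono hb0 in
lemma bmod_nonneg : ∀ s, 0 ≤ bmod b s := fun s => by
  have h := hb_mono (Set.mem_Ici.2 le_rfl) (Set.mem_Ici.2 (le_max_right s 0)) (le_max_right s 0)
  rw [hb0] at h; exact h

include hb_mono in
lemma bmod_intint (a c : ℝ) : IntervalIntegrable (bmod b) volume a c :=
  ((bmod_mono hb_mono).monotoneOn _).intervalIntegrable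

include hb_mono in
lemma Gfun_cont : Continuous (Gfun b) := by
  have h := intervalIntegral.continuous_primitive (fun a c => bmod_intint hb_mono a c) (0:ℝ)
  exact h.comp (continuous_id.max continuous_const)

include hb_mono hb0 in
lemma Gfun_nonneg : ∀ x, 0 ≤ Gfun b x := fun x =>
  intervalIntegral.integral_nonneg (le_max_right x 0) (fun s _ => bmod_nonneg hb_mono hb0 s)

lemma Gfun_zero : Gfun b 0 = 0 := by simp [Gfun]

include hb_mono hb0 in
lemma Gfun_mono : Monotone (Gfun b) := by
  intro x y hxy
  have hx' : max x 0 ≤ max y 0 := max_le_max hxy le_rfl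
  have h1 : Gfun b y = Gfun b x + ∫ s in (max x 0)..(max y 0), bmod b s := by
    rw [Gfun, Gfun, intervalIntegral.integral_add_adjacent_intervals (bmod_intint hb_mono _ _)
      (bmod_intint hb_mono _ _)]
  rw [h1]
  have : 0 ≤ ∫ s in (max x 0)..(max y 0), bmod b s :=
    intervalIntegral.integral_nonneg hx' (fun s _ => bmod_nonneg hb_mono hb0 s)
  linarith

include hb_mono hb_pos in
lemma Gfun_pos : ∀ x > (0:ℝ), 0 < Gfun b x := by
  intro x hx
  have hmax : max x 0 = x := max_eq_left hx.le
  rw [Gfun, hmax]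
  refine intervalIntegral.intervalIntegral_pos_of_pos_on (bmod_intint hb_mono 0 x) ?_ hx
  intro s hs
  have : bmod b s = b s := by rw [bmod, max_eq_left hs.1.le]
  rw [this]; exact hb_pos s hs.1

include hb_mono hb_rc in
lemma Gfun_deriv : ∀ x ≥ (0:ℝ), HasDerivWithinAt (Gfun b) (b x) (Set.Ici x) x := by
  intro x hx
  have hmeas : StronglyMeasurableAtFilter (bmod b) (nhdsWithin x (Set.Ioi x)) :=
    ⟨Set.univ, Filter.univ_mem,
      ((bmod_mono hb_mono).measurable.aestronglyMeasurable)⟩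
  have hcw : ContinuousWithinAt (bmod b) (Set.Ici x) x := by
    refine (hb_rc x hx).congr (fun s hs => ?_) ?_
    · rw [bmod, max_eq_left (le_trans hx hs)]
    · rw [bmod, max_eq_left hx]
  have hF : HasDerivWithinAt (fun y => ∫ s in (0:ℝ)..y, bmod b s) (bmod b x) (Set.Ici x) x :=
    intervalIntegral.integral_hasDerivWithinAt_right (bmod_intint hb_mono 0 x) hmeas
      (hcw.mono Set.Ioi_subset_Ici_self)
  have hb' : bmod b x = b x := by rw [bmod, max_eq_left hx]
  rw [hb'] at hF
  refine hF.congr (fun y hy => ?_) ?_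
  · rw [Gfun, max_eq_left (le_trans hx hy)]
  · rw [Gfun, max_eq_left hx]

end Gfacts

open Filter MeasureTheory Set intervalIntegral Real Topology

section scaling
variable {b : ℝ → ℝ} {l m : ℝ}
variable (hb_mono : MonotoneOn b (Set.Ici 0))
variable (hb_rc : ∀ t ≥ (0:ℝ), ContinuousWithinAt b (Set.Ici t) t)
variable (hb0 : b 0 = 0)
variable (hb_pos : ∀ t > (0:ℝ), 0 < b t)
variable (hl_rat : ∀ t > (0:ℝ), l * Gfun b t ≤ t * b t)
variable (hm_rat : ∀ t > (0:ℝ), t * b t ≤ m * Gfun b t)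

include hb_mono hb_rc hb0 hl_rat hm_rat in
lemma Gfun_scale_up : ∀ x ≥ (0:ℝ), ∀ c ≥ (1:ℝ),
    c ^ l * Gfun b x ≤ Gfun b (c * x) ∧ Gfun b (c * x) ≤ c ^ m * Gfun b x := by
  intro x hx c hc
  rcases eq_or_lt_of_le hx with hx0 | hx0
  · rw [← hx0, mul_zero, Gfun_zero, mul_zero, mul_zero]
    exact ⟨le_rfl, le_rfl⟩
  have hc0 : (0:ℝ) < c := lt_of_lt_of_le one_pos hc
  set X := Real.log c with hX
  have hX0 : 0 ≤ X := Real.log_nonneg hc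
  set f : ℝ → ℝ := fun τ => Gfun b (x * Real.exp τ) with hf
  set f' : ℝ → ℝ := fun τ => b (x * Real.exp τ) * (x * Real.exp τ) with hf'
  have hxe : ∀ τ : ℝ, 0 < x * Real.exp τ := fun τ => mul_pos hx0 (Real.exp_pos τ)
  have hfd : ∀ τ : ℝ, HasDerivWithinAt f (f' τ) (Set.Ici τ) τ := by
    intro τ
    have hi : HasDerivAt (fun τ : ℝ => x * Real.exp τ) (x * Real.exp τ) τ :=
      (Real.hasDerivAt_exp τ).const_mul x
    have ho := Gfun_deriv hb_mono hb_rc (x * Real.exp τ) (hxe τ).le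
    have hmaps : Set.MapsTo (fun τ : ℝ => x * Real.exp τ) (Set.Ici τ)
        (Set.Ici (x * Real.exp τ)) := fun σ hσ =>
      Set.mem_Ici.2 (mul_le_mul_of_nonneg_left (Real.exp_le_exp.2 hσ) hx0.le)
    exact ho.comp τ hi.hasDerivWithinAt hmaps
  have hfc : ContinuousOn f (Set.Icc 0 X) :=
    ((Gfun_cont hb_mono).comp (continuous_const.mul Real.continuous_exp)).continuousOn
  have hfnn : ∀ τ, 0 ≤ f τ := fun τ => Gfun_nonneg hb_mono hb0 _
  have hf'nn : ∀ τ, 0 ≤ f' τ := by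
    intro τ
    have hbnn : 0 ≤ b (x * Real.exp τ) := by
      have h := hb_mono (Set.mem_Ici.2 le_rfl) (Set.mem_Ici.2 (hxe τ).le) (hxe τ).le
      rwa [hb0] at h
    exact mul_nonneg hbnn (hxe τ).le
  have hfX : f X = Gfun b (c * x) := by
    rw [hf]; simp only [hX, Real.exp_log hc0, mul_comm x c]
  have hf0 : f 0 = Gfun b x := by rw [hf]; simp
  constructor
  · -- lower bound via monotonicity of exp(-(l τ)) * f τ
    set g : ℝ → ℝ := fun τ => Real.exp (-(l * τ)) * f τ with hg
    set g' : ℝ → ℝ := fun τ => Real.exp (-(l * τ)) * (-l) * f τ + Real.exp (-(l * τ)) * f' τ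
      with hg'
    have hgd : ∀ τ, HasDerivWithinAt g (g' τ) (Set.Ici τ) τ := by
      intro τ
      have he : HasDerivAt (fun τ : ℝ => Real.exp (-(l * τ))) (Real.exp (-(l * τ)) * (-l)) τ := by
        have h1 : HasDerivAt (fun τ : ℝ => -(l * τ)) (-l) τ := by
          simpa [neg_mul] using (hasDerivAt_id τ).const_mul (-l)
        exact h1.exp
      exact he.hasDerivWithinAt.mul (hfd τ)
    have hbound : ∀ τ ∈ Set.Ico 0 X, (0:ℝ) ≤ g' τ := by
      intro τ _
      have hfτ : f τ = Gfun b (x * Real.exp τ) := rfl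
      have hf'τ : f' τ = b (x * Real.exp τ) * (x * Real.exp τ) := rfl
      have h := hl_rat (x * Real.exp τ) (hxe τ)
      have h2 : 0 ≤ f' τ - l * f τ := by rw [hfτ, hf'τ]; linarith
      have h3 : g' τ = Real.exp (-(l * τ)) * (f' τ - l * f τ) := by
        show Real.exp (-(l * τ)) * (-l) * f τ + Real.exp (-(l * τ)) * f' τ = _
        ring
      rw [h3]
      exact mul_nonneg (Real.exp_pos _).le h2
    have hgc : ContinuousOn g (Set.Icc 0 X) :=
      (Real.continuous_exp.comp (continuous_const.mul continuous_id).neg).continuousOn.mul hfc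
    have key : g 0 ≤ g X := by
      have := image_le_of_deriv_right_le_deriv_boundary
        (f := fun _ : ℝ => g 0) (f' := fun _ : ℝ => 0) (a := 0) (b := X)
        continuousOn_const (fun τ _ => (hasDerivWithinAt_const τ _ (g 0)))
        le_rfl hgc (fun τ hτ => hgd τ) (fun τ hτ => hbound τ hτ)
      exact this (Set.right_mem_Icc.2 hX0)
    have hg0 : g 0 = Gfun b x := by
      show Real.exp (-(l * 0)) * f 0 = _
      rw [hf0]; simp
    have hgX : g X = (c ^ l)⁻¹ * Gfun b (c * x) := by
      show Real.exp (-(l * X)) * f X = _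
      rw [hfX]
      congr 1
      rw [Real.rpow_def_of_pos hc0, ← Real.exp_neg]
      rw [hX]
      ring_nf
    have hcl : (0:ℝ) < c ^ l := Real.rpow_pos_of_pos hc0 l
    rw [hg0, hgX] at key
    calc c ^ l * Gfun b x ≤ c ^ l * ((c ^ l)⁻¹ * Gfun b (c * x)) := by
          exact mul_le_mul_of_nonneg_left key hcl.le
      _ = Gfun b (c * x) := by field_simp
  · -- upper via Gronwall
    have hbound : ∀ τ ∈ Set.Ico 0 X, ‖f' τ‖ ≤ m * ‖f τ‖ + 0 := by
      intro τ _
      rw [Real.norm_eq_abs, Real.norm_eq_abs, abs_of_nonneg (hf'nn τ), abs_of_nonneg (hfnn τ),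
        add_zero]
      have hfτ : f τ = Gfun b (x * Real.exp τ) := rfl
      have hf'τ : f' τ = b (x * Real.exp τ) * (x * Real.exp τ) := rfl
      have h := hm_rat (x * Real.exp τ) (hxe τ)
      rw [hfτ, hf'τ]; linarith
    have ha : ‖f 0‖ ≤ Gfun b x := by
      rw [Real.norm_eq_abs, abs_of_nonneg (hfnn 0), hf0]
    have key := norm_le_gronwallBound_of_norm_deriv_right_le hfc
      (fun τ hτ => hfd τ) ha hbound X (Set.right_mem_Icc.2 hX0)
    rw [gronwallBound_ε0, Real.norm_eq_abs, abs_of_nonneg (hfnn X), hfX, sub_zero] at key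
    calc Gfun b (c * x) ≤ Gfun b x * Real.exp (m * X) := key
      _ = c ^ m * Gfun b x := by
          rw [Real.rpow_def_of_pos hc0, mul_comm (Gfun b x), mul_comm m X]

end scaling
section scaledown
variable {b : ℝ → ℝ} {l m : ℝ}
variable (hb_mono : MonotoneOn b (Set.Ici 0))
variable (hb_rc : ∀ t ≥ (0:ℝ), ContinuousWithinAt b (Set.Ici t) t)
variable (hb0 : b 0 = 0)
variable (hl_rat : ∀ t > (0:ℝ), l * Gfun b t ≤ t * b t)
variable (hm_rat : ∀ t > (0:ℝ), t * b t ≤ m * Gfun b t)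

include hb_mono hb_rc hb0 hl_rat hm_rat in
lemma Gfun_scale_down : ∀ x ≥ (0:ℝ), ∀ c, 0 < c → c ≤ 1 →
    c ^ m * Gfun b x ≤ Gfun b (c * x) ∧ Gfun b (c * x) ≤ c ^ l * Gfun b x := by
  intro x hx c hc0 hc1
  have hc' : (1:ℝ) ≤ c⁻¹ := (one_le_inv_iff₀).2 ⟨hc0, hc1⟩
  have hcx : 0 ≤ c * x := mul_nonneg hc0.le hx
  obtain ⟨h1, h2⟩ := Gfun_scale_up hb_mono hb_rc hb0 hl_rat hm_rat (c * x) hcx c⁻¹ hc'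
  have hxx : c⁻¹ * (c * x) = x := by field_simp
  rw [hxx, Real.inv_rpow hc0.le] at h1 h2
  have hpl : (0:ℝ) < c ^ l := Real.rpow_pos_of_pos hc0 l
  have hpm : (0:ℝ) < c ^ m := Real.rpow_pos_of_pos hc0 m
  constructor
  · calc c ^ m * Gfun b x ≤ c ^ m * ((c ^ m)⁻¹ * Gfun b (c * x)) :=
          mul_le_mul_of_nonneg_left h2 hpm.le
      _ = Gfun b (c * x) := by field_simp
  · calc Gfun b (c * x) = c ^ l * ((c ^ l)⁻¹ * Gfun b (c * x)) := by field_simp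
      _ ≤ c ^ l * Gfun b x := mul_le_mul_of_nonneg_left h1 hpl.le

end scaledown
noncomputable def luxemburgNorm {Ω : Type*} [MeasurableSpace Ω] (μ : Measure Ω)
    (B : ℝ → ℝ) (u : Ω → ℝ) : ℝ :=
  sInf {lam : ℝ | 0 < lam ∧ ∫ x, B (u x / lam) ∂μ ≤ 1}

theorem stmt_16 {Ω : Type*} [MeasurableSpace Ω] (μ : Measure Ω)
    (b B : ℝ → ℝ) (l m : ℝ)
    (hb_mono : MonotoneOn b (Set.Ici 0))
    (hb_rc : ∀ t ≥ (0:ℝ), ContinuousWithinAt b (Set.Ici t) t)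
    (hb0 : b 0 = 0)
    (hb_pos : ∀ t > (0:ℝ), 0 < b t)
    (hb_top : Tendsto b atTop atTop)
    (hB : ∀ t, B t = ∫ s in (0:ℝ)..|t|, b s)
    (hl : IsGLB {r : ℝ | ∃ t > (0:ℝ), r = t * b t / B t} l)
    (hm : IsLUB {r : ℝ | ∃ t > (0:ℝ), r = t * b t / B t} m)
    (h1l : 1 ≤ l) (hlm : l ≤ m)
    (u : Ω → ℝ) (hu_meas : AEMeasurable u μ)
    (hu : Integrable (fun x => B (|u x|)) μ) :
    min (luxemburgNorm μ B u ^ l) (luxemburgNorm μ B u ^ m) ≤ ∫ x, B (u x) ∂μ ∧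
    (∫ x, B (u x) ∂μ) ≤ max (luxemburgNorm μ B u ^ l) (luxemburgNorm μ B u ^ m) := by
  classical
  set G := Gfun b with hGdef
  have hGc : Continuous G := Gfun_cont hb_mono
  have hGnn : ∀ x, 0 ≤ G x := Gfun_nonneg hb_mono hb0
  have hGmono : Monotone G := Gfun_mono hb_mono hb0
  have hGpos : ∀ x > (0:ℝ), 0 < G x := Gfun_pos hb_mono hb_pos
  have hBG : ∀ t, B t = G |t| := by
    intro t
    rw [hB t, hGdef, Gfun, max_eq_left (abs_nonneg t)]
    refine intervalIntegral.integral_congr (fun s hs => ?_)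
    rw [Set.uIcc_of_le (abs_nonneg t)] at hs
    simp [bmod, max_eq_left hs.1]
  have hBGpos : ∀ t > (0:ℝ), B t = G t := fun t ht => by rw [hBG t, abs_of_pos ht]
  have hl_rat : ∀ t > (0:ℝ), l * G t ≤ t * b t := by
    intro t ht
    have hle : l ≤ t * b t / B t := hl.1 ⟨t, ht, rfl⟩
    have hBpos : 0 < B t := by rw [hBGpos t ht]; exact hGpos t ht
    have h2 := (le_div_iff₀ hBpos).1 hle
    rwa [hBGpos t ht] at h2
  have hm_rat : ∀ t > (0:ℝ), t * b t ≤ m * G t := by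
    intro t ht
    have hle : t * b t / B t ≤ m := hm.1 ⟨t, ht, rfl⟩
    have hBpos : 0 < B t := by rw [hBGpos t ht]; exact hGpos t ht
    have h2 := (div_le_iff₀ hBpos).1 hle
    rwa [hBGpos t ht] at h2
  have hup := Gfun_scale_up hb_mono hb_rc hb0 hl_rat hm_rat
  have hdn := Gfun_scale_down hb_mono hb_rc hb0 hl_rat hm_rat
  have hl0 : (0:ℝ) < l := lt_of_lt_of_le one_pos h1l
  have hm1 : (1:ℝ) ≤ m := h1l.trans hlm
  have hm0 : (0:ℝ) < m := lt_of_lt_of_le one_pos hm1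
  -- measure-theoretic setup
  have huabs : AEMeasurable (fun x => |u x|) μ := measurable_abs.comp_aemeasurable hu_meas
  have habs : ∀ lam : ℝ, 0 < lam → ∀ x, B (u x / lam) = G (|u x| / lam) := by
    intro lam hlam x
    rw [hBG, abs_div, abs_of_pos hlam]
  have hGu_int : Integrable (fun x => G (|u x|)) μ := by
    have h : (fun x => B (|u x|)) = fun x => G (|u x|) := funext fun x => by rw [hBG, abs_abs]
    rwa [h] at hu
  have hmeas : ∀ lam : ℝ, AEStronglyMeasurable (fun x => G (|u x| / lam)) μ := fun lam =>
    (hGc.measurable.comp_aemeasurable (huabs.div_const lam)).aestronglyMeasurable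
  have hptu : ∀ lam : ℝ, 0 < lam → lam ≤ 1 → ∀ y : ℝ, 0 ≤ y →
      lam⁻¹ ^ l * G y ≤ G (y / lam) ∧ G (y / lam) ≤ lam⁻¹ ^ m * G y := by
    intro lam h0 h1 y hy
    have hc : (1:ℝ) ≤ lam⁻¹ := one_le_inv_iff₀.2 ⟨h0, h1⟩
    have h2 := hup y hy lam⁻¹ hc
    rwa [← div_eq_inv_mul y lam] at h2
  have hptd : ∀ lam : ℝ, 1 ≤ lam → ∀ y : ℝ, 0 ≤ y →
      lam⁻¹ ^ m * G y ≤ G (y / lam) ∧ G (y / lam) ≤ lam⁻¹ ^ l * G y := by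
    intro lam h1 y hy
    have h0 : (0:ℝ) < lam := lt_of_lt_of_le one_pos h1
    have h2 := hdn y hy lam⁻¹ (inv_pos.2 h0) (inv_le_one_of_one_le₀ h1)
    rwa [← div_eq_inv_mul y lam] at h2
  have hint : ∀ lam : ℝ, 0 < lam → Integrable (fun x => G (|u x| / lam)) μ := by
    intro lam h0
    set C := max (lam⁻¹ ^ l) (lam⁻¹ ^ m) with hC
    have hC0 : 0 ≤ C := le_trans (Real.rpow_nonneg (inv_nonneg.2 h0.le) l) (le_max_left _ _)
    have hbd : ∀ x, G (|u x| / lam) ≤ C * G (|u x|) := by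
      intro x
      rcases le_or_gt lam 1 with hle | hlt
      · exact le_trans (hptu lam h0 hle _ (abs_nonneg _)).2
          (mul_le_mul_of_nonneg_right (le_max_right _ _) (hGnn _))
      · exact le_trans (hptd lam hlt.le _ (abs_nonneg _)).2
          (mul_le_mul_of_nonneg_right (le_max_left _ _) (hGnn _))
    refine Integrable.mono (hGu_int.const_mul C) (hmeas lam) ?_
    refine Filter.Eventually.of_forall (fun x => ?_)
    rw [Real.norm_eq_abs, Real.norm_eq_abs, abs_of_nonneg (hGnn _),
      abs_of_nonneg (mul_nonneg hC0 (hGnn _))]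
    exact hbd x
  have hIeq : ∀ lam : ℝ, 0 < lam →
      (∫ x, B (u x / lam) ∂μ) = ∫ x, G (|u x| / lam) ∂μ := fun lam h0 =>
    integral_congr_ae (Filter.Eventually.of_forall fun x => habs lam h0 x)
  set I := ∫ x, G (|u x|) ∂μ with hIdef
  have hIB : (∫ x, B (u x) ∂μ) = I :=
    integral_congr_ae (Filter.Eventually.of_forall fun x => hBG (u x))
  have hInn : 0 ≤ I := integral_nonneg fun x => hGnn _
  set S := {lam : ℝ | 0 < lam ∧ (∫ x, B (u x / lam) ∂μ) ≤ 1} with hSdef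
  have hnorm : luxemburgNorm μ B u = sInf S := rfl
  have hSbdd : BddBelow S := ⟨0, fun lam hlam => hlam.1.le⟩
  have hS_anti : ∀ lam1 lam2 : ℝ, 0 < lam1 → lam1 ≤ lam2 →
      (∫ x, G (|u x| / lam2) ∂μ) ≤ ∫ x, G (|u x| / lam1) ∂μ := by
    intro lam1 lam2 h1 h12
    have h2 : 0 < lam2 := lt_of_lt_of_le h1 h12
    refine integral_mono (hint lam2 h2) (hint lam1 h1) (fun x => ?_)
    refine hGmono ?_
    gcongr
  have hS_ne : S.Nonempty := by
    set lam0 := max 1 I + 1 with hlam0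
    have h1lam : (1:ℝ) ≤ lam0 := le_trans (le_max_left 1 I) (by simp [hlam0])
    have h0lam : (0:ℝ) < lam0 := lt_of_lt_of_le one_pos h1lam
    refine ⟨lam0, h0lam, ?_⟩
    rw [hIeq lam0 h0lam]
    have hpt : ∀ x, G (|u x| / lam0) ≤ lam0⁻¹ * G (|u x|) := by
      intro x
      refine le_trans (hptd lam0 h1lam _ (abs_nonneg _)).2 ?_
      have h2 : lam0⁻¹ ^ l ≤ lam0⁻¹ ^ (1:ℝ) :=
        Real.rpow_le_rpow_of_exponent_ge (inv_pos.2 h0lam) (inv_le_one_of_one_le₀ h1lam) h1l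
      rw [Real.rpow_one] at h2
      exact mul_le_mul_of_nonneg_right h2 (hGnn _)
    have hIlam : I ≤ lam0 := le_trans (le_max_right 1 I) (by simp [hlam0])
    calc (∫ x, G (|u x| / lam0) ∂μ) ≤ ∫ x, lam0⁻¹ * G (|u x|) ∂μ :=
          integral_mono (hint lam0 h0lam) (hGu_int.const_mul _) hpt
      _ = lam0⁻¹ * I := integral_const_mul _ _
      _ ≤ lam0⁻¹ * lam0 := mul_le_mul_of_nonneg_left hIlam (inv_pos.2 h0lam).le
      _ = 1 := inv_mul_cancel₀ (ne_of_gt h0lam)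
  set k := sInf S with hk
  have hk0 : 0 ≤ k := le_csInf hS_ne fun lam hlam => hlam.1.le
  rw [hIB, hnorm]
  rcases eq_or_lt_of_le hk0 with hk0' | hkpos
  · -- case k = 0 : integral is 0
    have hI0 : I = 0 := by
      by_contra hne
      have hIpos : 0 < I := lt_of_le_of_ne hInn (Ne.symm hne)
      have claim : ∀ ε : ℝ, 0 < ε → ε ≤ 1 → I ≤ ε := by
        intro ε hε hε1
        have hlt : sInf S < ε := by rw [← hk, ← hk0']; exact hε
        obtain ⟨lam, hlamS, hlamε⟩ := exists_lt_of_csInf_lt hS_ne hlt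
        have h0 : 0 < lam := hlamS.1
        have h1 : lam ≤ 1 := le_trans hlamε.le hε1
        have hone : (1:ℝ) ≤ lam⁻¹ := one_le_inv_iff₀.2 ⟨h0, h1⟩
        have hpt : ∀ x, lam⁻¹ * G (|u x|) ≤ G (|u x| / lam) := by
          intro x
          refine le_trans ?_ (hptu lam h0 h1 _ (abs_nonneg _)).1
          have h2 : lam⁻¹ ^ (1:ℝ) ≤ lam⁻¹ ^ l := Real.rpow_le_rpow_of_exponent_le hone h1l
          rw [Real.rpow_one] at h2
          exact mul_le_mul_of_nonneg_right h2 (hGnn _)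
        have hle1 : (∫ x, G (|u x| / lam) ∂μ) ≤ 1 := by
          rw [← hIeq lam h0]; exact hlamS.2
        have hkey : lam⁻¹ * I ≤ 1 := by
          calc lam⁻¹ * I = ∫ x, lam⁻¹ * G (|u x|) ∂μ := (MeasureTheory.integral_const_mul _ _).symm
            _ ≤ ∫ x, G (|u x| / lam) ∂μ := integral_mono (hGu_int.const_mul _) (hint lam h0) hpt
            _ ≤ 1 := hle1
        have hIlam : I ≤ lam := by
          have hl2 := mul_le_mul_of_nonneg_left hkey h0.le
          rwa [mul_one, ← mul_assoc, mul_inv_cancel₀ (ne_of_gt h0), one_mul] at hl2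
        exact hIlam.trans hlamε.le
      have h3 := claim (min (I/2) 1) (lt_min (by linarith) one_pos) (min_le_right _ _)
      have h4 := le_trans h3 (min_le_left _ _)
      linarith
    rw [hI0, ← hk0', Real.zero_rpow (ne_of_gt hl0), Real.zero_rpow (ne_of_gt hm0)]
    simp
  · -- case k > 0
    have hmemS : ∀ lam : ℝ, k < lam → (∫ x, G (|u x| / lam) ∂μ) ≤ 1 := by
      intro lam hklam
      obtain ⟨s, hsS, hs⟩ := exists_lt_of_csInf_lt hS_ne (by rw [← hk]; exact hklam)
      calc (∫ x, G (|u x| / lam) ∂μ) ≤ ∫ x, G (|u x| / s) ∂μ := hS_anti s lam hsS.1 hs.le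
        _ ≤ 1 := by rw [← hIeq s hsS.1]; exact hsS.2
    set J := ∫ x, G (|u x| / k) ∂μ with hJdef
    have hJnn : 0 ≤ J := integral_nonneg fun x => hGnn _
    have hJ1 : J ≤ 1 := by
      have hlim : Tendsto (fun n : ℕ => ∫ x, G (|u x| / (k + 1 / ((n:ℝ) + 1))) ∂μ)
          atTop (𝓝 J) := by
        refine tendsto_integral_of_dominated_convergence (fun x => G (|u x| / k))
          (fun n => hmeas _) (hint k hkpos) ?_ ?_
        · intro n
          refine Filter.Eventually.of_forall fun x => ?_
          rw [Real.norm_eq_abs, abs_of_nonneg (hGnn _)]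
          refine hGmono ?_
          have h5 : (0:ℝ) < 1 / ((n:ℝ) + 1) := by positivity
          rcases eq_or_lt_of_le (abs_nonneg (u x)) with h6 | h6
          · rw [← h6]; simp
          · exact (div_le_div_iff_of_pos_left h6 (by linarith) hkpos).2 (by linarith)
        · refine Filter.Eventually.of_forall fun x => ?_
          have h1 : Tendsto (fun n : ℕ => k + 1 / ((n:ℝ) + 1)) atTop (𝓝 k) := by
            simpa using tendsto_one_div_add_atTop_nhds_zero_nat.const_add k
          have h2 : Tendsto (fun n : ℕ => |u x| / (k + 1 / ((n:ℝ) + 1))) atTop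
              (𝓝 (|u x| / k)) := tendsto_const_nhds.div h1 (ne_of_gt hkpos)
          exact (hGc.tendsto _).comp h2
      refine le_of_tendsto hlim (Filter.Eventually.of_forall fun n => ?_)
      refine hmemS _ ?_
      have h5 : (0:ℝ) < 1 / ((n:ℝ) + 1) := by positivity
      linarith
    have hJ2 : 1 ≤ J := by
      have step : ∀ c : ℝ, 1 < c → 1 ≤ c ^ m * J := by
        intro c hc
        have hc0 : (0:ℝ) < c := lt_trans one_pos hc
        have hlam0 : 0 < k / c := div_pos hkpos hc0
        have hlamk : k / c < k := by
          rw [div_lt_iff₀ hc0]; nlinarith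
        have hnot : (k / c) ∉ S := by
          intro hmem
          have h6 := csInf_le hSbdd hmem
          rw [← hk] at h6
          exact absurd h6 (not_le.2 hlamk)
        have hgt : 1 < ∫ x, G (|u x| / (k / c)) ∂μ := by
          by_contra hle
          exact hnot ⟨hlam0, by rw [hIeq _ hlam0]; exact not_lt.1 hle⟩
        have hptw : ∀ x, G (|u x| / (k / c)) ≤ c ^ m * G (|u x| / k) := by
          intro x
          have harg : |u x| / (k / c) = c * (|u x| / k) := by
            rw [div_div_eq_mul_div, mul_comm (|u x|) c, mul_div_assoc]
          rw [harg]
          exact (hup (|u x| / k) (by positivity) c hc.le).2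
        have h7 : (∫ x, G (|u x| / (k / c)) ∂μ) ≤ c ^ m * J := by
          calc (∫ x, G (|u x| / (k / c)) ∂μ) ≤ ∫ x, c ^ m * G (|u x| / k) ∂μ :=
                integral_mono (hint _ hlam0) ((hint k hkpos).const_mul _) hptw
            _ = c ^ m * J := integral_const_mul _ _
        linarith
      have hseq : Tendsto (fun n : ℕ => ((1:ℝ) + 1 / ((n:ℝ) + 1)) ^ m * J) atTop (𝓝 J) := by
        have h1 : Tendsto (fun n : ℕ => (1:ℝ) + 1 / ((n:ℝ) + 1)) atTop (𝓝 1) := by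
          simpa using tendsto_one_div_add_atTop_nhds_zero_nat.const_add (1:ℝ)
        have h2 := h1.rpow_const (Or.inr hm0.le)
        rw [Real.one_rpow] at h2
        simpa using h2.mul_const J
      refine ge_of_tendsto hseq (Filter.Eventually.of_forall fun n => ?_)
      refine step _ ?_
      have h5 : (0:ℝ) < 1 / ((n:ℝ) + 1) := by positivity
      linarith
    have harg : ∀ y : ℝ, k * (y / k) = y := fun y => by field_simp
    rcases le_total 1 k with hk1 | hk1
    · -- k ≥ 1
      have hlm' : k ^ l ≤ k ^ m := Real.rpow_le_rpow_of_exponent_le hk1 hlm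
      rw [min_eq_left hlm', max_eq_right hlm']
      constructor
      · have hpt : ∀ x, k ^ l * G (|u x| / k) ≤ G (|u x|) := by
          intro x
          have h8 := (hup (|u x| / k) (by positivity) k hk1).1
          rwa [harg (|u x|)] at h8
        calc k ^ l = k ^ l * 1 := (mul_one _).symm
          _ ≤ k ^ l * J := mul_le_mul_of_nonneg_left hJ2 (Real.rpow_nonneg hk0 l)
          _ = ∫ x, k ^ l * G (|u x| / k) ∂μ := (MeasureTheory.integral_const_mul _ _).symm
          _ ≤ I := integral_mono ((hint k hkpos).const_mul _) hGu_int hpt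
      · have hpt : ∀ x, G (|u x|) ≤ k ^ m * G (|u x| / k) := by
          intro x
          have h8 := (hup (|u x| / k) (by positivity) k hk1).2
          rwa [harg (|u x|)] at h8
        calc I ≤ ∫ x, k ^ m * G (|u x| / k) ∂μ :=
              integral_mono hGu_int ((hint k hkpos).const_mul _) hpt
          _ = k ^ m * J := integral_const_mul _ _
          _ ≤ k ^ m * 1 := mul_le_mul_of_nonneg_left hJ1 (Real.rpow_nonneg hk0 m)
          _ = k ^ m := mul_one _
    · -- k ≤ 1
      have hlm' : k ^ m ≤ k ^ l := Real.rpow_le_rpow_of_exponent_ge hkpos hk1 hlm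
      rw [min_eq_right hlm', max_eq_left hlm']
      constructor
      · have hpt : ∀ x, k ^ m * G (|u x| / k) ≤ G (|u x|) := by
          intro x
          have h8 := (hdn (|u x| / k) (by positivity) k hkpos hk1).1
          rwa [harg (|u x|)] at h8
        calc k ^ m = k ^ m * 1 := (mul_one _).symm
          _ ≤ k ^ m * J := mul_le_mul_of_nonneg_left hJ2 (Real.rpow_nonneg hk0 m)
          _ = ∫ x, k ^ m * G (|u x| / k) ∂μ := (MeasureTheory.integral_const_mul _ _).symm
          _ ≤ I := integral_mono ((hint k hkpos).const_mul _) hGu_int hpt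
      · have hpt : ∀ x, G (|u x|) ≤ k ^ l * G (|u x| / k) := by
          intro x
          have h8 := (hdn (|u x| / k) (by positivity) k hkpos hk1).2
          rwa [harg (|u x|)] at h8
        calc I ≤ ∫ x, k ^ l * G (|u x| / k) ∂μ :=
              integral_mono hGu_int ((hint k hkpos).const_mul _) hpt
          _ = k ^ l * J := integral_const_mul _ _
          _ ≤ k ^ l * 1 := mul_le_mul_of_nonneg_left hJ1 (Real.rpow_nonneg hk0 l)
          _ = k ^ l := mul_one _
end
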